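/- Let θ̃ ∈ ℝ and let Q : ℝ → (S × S → ℝ) be a parameterized family such that Q(θ) vanishes off B for every θ, each coordinate θ ↦ Q_{ij}(θ) is differentiable at θ̃, and Q(θ̃) = Q̃. Then the composite function θ ↦ ψ̄_{Q̃}(Q(θ)) is differentiable at θ̃ and its derivative at θ̃ equals 0. -/

import Mathlib

open Finset

/-- Row sum `μ_i(Q) = Σ_{j : (i,j) ∈ B} Q_{ij}` of an edge measure `Q` supported on `B`. -/
noncomputable def rowSum {S : Type} [Fintype S] [DecidableEq S]
    (B : Finset (S × S)) (Q : S × S → ℝ) (i : S) : ℝ :=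
  ∑ j ∈ Finset.univ.filter (fun j => (i, j) ∈ B), Q (i, j)

/-- The shifted edge measure `Q̂_{ij} = (1-κ)·Q̃_{ij} + κ·Q_{ij}`. -/
noncomputable def hatQ {α : Type} (Qt : α → ℝ) (κ : ℝ) (Q : α → ℝ) : α → ℝ :=
  fun e => (1 - κ) * Qt e + κ * Q e

/-- The surrogate penalty function
`ψ̄_{Q̃}(Q) = κ'·( Σ_{(i,j)∈B} Q̂_{ij}·log(Q̂_{ij}/Q̃_{ij}) − Σ_{i∈S} μ̂_i·log(μ̂_i/μ̃_i) )`,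
with the convention `0·log(0/b) = 0` (automatic, since `Real.log 0 = 0`). -/
noncomputable def psibar {S : Type} [Fintype S] [DecidableEq S]
    (B : Finset (S × S)) (Qt : S × S → ℝ) (κ κ' : ℝ) (Q : S × S → ℝ) : ℝ :=
  κ' * ((∑ e ∈ B, hatQ Qt κ Q e * Real.log (hatQ Qt κ Q e / Qt e)) -
        ∑ i : S, rowSum B (hatQ Qt κ Q) i *
          Real.log (rowSum B (hatQ Qt κ Q) i / rowSum B Qt i))

/-- Derivative of `x ↦ x·log(x/c)` at `x = c` is `1`, for `c > 0`. -/
lemma outer_hasDerivAt (c : ℝ) (hc : 0 < c) :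
    HasDerivAt (fun x : ℝ => x * Real.log (x / c)) 1 c := by
  have h1 : HasDerivAt (fun x : ℝ => x / c) (1 / c) c := (hasDerivAt_id c).div_const c
  have h2 : HasDerivAt (fun x : ℝ => Real.log (x / c)) ((c / c)⁻¹ * (1 / c)) c :=
    (Real.hasDerivAt_log (by positivity)).comp c h1
  have h3 := (hasDerivAt_id c).mul h2
  have : 1 * Real.log (c / c) + c * ((c / c)⁻¹ * (1 / c)) = 1 := by
    rw [div_self hc.ne']
    simp [Real.log_one]
    field_simp
  simp only [id_eq] at h3
  rw [this] at h3
  exact h3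

lemma sum_over_B_regroup {S : Type} [Fintype S] [DecidableEq S]
    (B : Finset (S × S)) (f : S × S → ℝ) :
    ∑ e ∈ B, f e =
      ∑ i : S, ∑ j ∈ Finset.univ.filter (fun j => (i, j) ∈ B), f (i, j) := by
  classical
  have : ∑ i : S, ∑ j ∈ Finset.univ.filter (fun j => (i, j) ∈ B), f (i, j)
      = ∑ i : S, ∑ j : S, if (i, j) ∈ B then f (i, j) else 0 := by
    refine Finset.sum_congr rfl fun i _ => ?_
    rw [Finset.sum_filter]
  rw [this,
    show (∑ i : S, ∑ j : S, if (i, j) ∈ B then f (i, j) else 0)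
        = ∑ p : S × S, if p ∈ B then f p else 0 from
      (Fintype.sum_prod_type (fun p : S × S => if p ∈ B then f p else 0)).symm,
    Finset.sum_ite_mem, Finset.univ_inter]

/-- Along any parameterized family `θ ↦ Q(θ)` of edge measures
vanishing off `B`, with each coordinate differentiable at `θ̃` and `Q(θ̃) = Q̃`, the
composite `θ ↦ ψ̄_{Q̃}(Q(θ))` is differentiable at `θ̃` with derivative `0`. -/
theorem psibar_deriv_zero_at_operating_point {S : Type} [Fintype S] [DecidableEq S]
    (B : Finset (S × S)) (hB : ∀ i : S, ∃ j : S, (i, j) ∈ B)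
    (Qt : S × S → ℝ) (hQtoff : ∀ e ∉ B, Qt e = 0) (hQtpos : ∀ e ∈ B, 0 < Qt e)
    (κ κ' : ℝ) (hκ0 : 0 < κ) (hκ1 : κ ≤ 1) (hκ' : 0 < κ')
    (θt : ℝ) (Qf : ℝ → S × S → ℝ)
    (hoff : ∀ θ : ℝ, ∀ e ∉ B, Qf θ e = 0)
    (hdiff : ∀ e : S × S, DifferentiableAt ℝ (fun θ => Qf θ e) θt)
    (hQft : Qf θt = Qt) :
    HasDerivAt (fun θ => psibar B Qt κ κ' (Qf θ)) 0 θt := by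
  classical
  set q' : S × S → ℝ := fun e => deriv (fun θ => Qf θ e) θt with hq'def
  have hq' : ∀ e, HasDerivAt (fun θ => Qf θ e) (q' e) θt := fun e => (hdiff e).hasDerivAt
  have hu : ∀ e, HasDerivAt (fun θ => hatQ Qt κ (Qf θ) e) (κ * q' e) θt := by
    intro e
    exact ((hq' e).const_mul κ).const_add ((1 - κ) * Qt e)
  have huval : ∀ e, hatQ Qt κ (Qf θt) e = Qt e := by
    intro e; simp only [hatQ, hQft]; ring
  -- edge terms
  have hedge : ∀ e ∈ B, HasDerivAt
      (fun θ => hatQ Qt κ (Qf θ) e * Real.log (hatQ Qt κ (Qf θ) e / Qt e))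
      (κ * q' e) θt := by
    intro e he
    have houter : HasDerivAt (fun x : ℝ => x * Real.log (x / Qt e)) 1
        (hatQ Qt κ (Qf θt) e) := (huval e).symm ▸ outer_hasDerivAt (Qt e) (hQtpos e he)
    have h := houter.comp θt (hu e)
    rw [one_mul] at h
    exact h
  -- row terms
  have hrow : ∀ i : S, HasDerivAt
      (fun θ => rowSum B (hatQ Qt κ (Qf θ)) i *
        Real.log (rowSum B (hatQ Qt κ (Qf θ)) i / rowSum B Qt i))
      (∑ j ∈ Finset.univ.filter (fun j => (i, j) ∈ B), κ * q' (i, j)) θt := by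
    intro i
    have hv : HasDerivAt (fun θ => rowSum B (hatQ Qt κ (Qf θ)) i)
        (∑ j ∈ Finset.univ.filter (fun j => (i, j) ∈ B), κ * q' (i, j)) θt :=
      HasDerivAt.fun_sum (fun j _ => hu (i, j))
    have hvval : rowSum B (hatQ Qt κ (Qf θt)) i = rowSum B Qt i := by
      unfold rowSum
      exact Finset.sum_congr rfl fun j _ => huval (i, j)
    have hμpos : 0 < rowSum B Qt i := by
      apply Finset.sum_pos
      · intro j hj
        exact hQtpos _ (Finset.mem_filter.mp hj).2
      · obtain ⟨j, hj⟩ := hB i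
        exact ⟨j, Finset.mem_filter.mpr ⟨Finset.mem_univ j, hj⟩⟩
    have houter : HasDerivAt (fun x : ℝ => x * Real.log (x / rowSum B Qt i)) 1
        (rowSum B (hatQ Qt κ (Qf θt)) i) := hvval.symm ▸ outer_hasDerivAt _ hμpos
    have h := houter.comp θt hv
    rw [one_mul] at h
    exact h
  have h1 : HasDerivAt
      (fun θ => ∑ e ∈ B, hatQ Qt κ (Qf θ) e * Real.log (hatQ Qt κ (Qf θ) e / Qt e))
      (∑ e ∈ B, κ * q' e) θt := HasDerivAt.fun_sum hedge
  have h2 : HasDerivAt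
      (fun θ => ∑ i : S, rowSum B (hatQ Qt κ (Qf θ)) i *
        Real.log (rowSum B (hatQ Qt κ (Qf θ)) i / rowSum B Qt i))
      (∑ i : S, ∑ j ∈ Finset.univ.filter (fun j => (i, j) ∈ B), κ * q' (i, j)) θt :=
    HasDerivAt.fun_sum (fun i _ => hrow i)
  have h3 := (h1.sub h2).const_mul κ'
  have hz : κ' * ((∑ e ∈ B, κ * q' e) -
      ∑ i : S, ∑ j ∈ Finset.univ.filter (fun j => (i, j) ∈ B), κ * q' (i, j)) = 0 := by
    rw [sum_over_B_regroup B (fun e => κ * q' e)]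
    ring
  rw [hz] at h3
  exact h3
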